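/- arXiv:2112.04166 — 2 statements merged into one kernel-verified Lean document; each statement's English description precedes it below -/
import Mathlib

section
/- For each x ∈ [0,1], there exists an instance in which all items are identical such that every allocation maximizing the weighted Nash welfare Π_{i ∈ N} u_i(A_i)^{w_i} over all allocations fails to satisfy WPROP(x, 1−x). -/
open Finset

/-- An allocation: a partition of the item set `Fin m` into `n` (possibly empty) bundles. -/
def IsAllocation {n m : ℕ} (A : Fin n → Finset (Fin m)) : Prop :=
  (∀ i j : Fin n, i ≠ j → Disjoint (A i) (A j)) ∧
    Finset.univ.biUnion A = (Finset.univ : Finset (Fin m))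

/-- Additive utility of agent `i` for a bundle `S`. -/
def util {n m : ℕ} (u : Fin n → Fin m → ℝ) (i : Fin n) (S : Finset (Fin m)) : ℝ :=
  ∑ g ∈ S, u i g

/-- Weighted envy-freeness up to (x, y)-fraction of one item. -/
def WEF {n m : ℕ} (w : Fin n → ℝ) (u : Fin n → Fin m → ℝ) (A : Fin n → Finset (Fin m))
    (x y : ℝ) : Prop :=
  ∀ i j : Fin n, ∃ B : Finset (Fin m), B ⊆ A j ∧ B.card ≤ 1 ∧
    (util u i (A i) + y * util u i B) / w i ≥ (util u i (A j) - x * util u i B) / w j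

/-- Weighted proportionality up to (x, y)-fraction of one item. -/
def WPROP {n m : ℕ} (w : Fin n → ℝ) (u : Fin n → Fin m → ℝ) (A : Fin n → Finset (Fin m))
    (x y : ℝ) : Prop :=
  ∀ i : Fin n, ∃ B : Finset (Fin m), B ⊆ Finset.univ \ A i ∧ B.card ≤ 1 ∧
    (util u i (A i) + y * util u i B) / w i ≥
      (util u i Finset.univ - (n : ℝ) * x * util u i B) / (∑ j, w j)

/-- The stronger notion WPROP*(x,y). -/
def WPROPstar {n m : ℕ} (w : Fin n → ℝ) (u : Fin n → Fin m → ℝ) (A : Fin n → Finset (Fin m))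
    (x y : ℝ) : Prop :=
  ∀ i : Fin n, ∃ B : Finset (Fin m), B ⊆ Finset.univ \ A i ∧ B.card ≤ 1 ∧
    ∃ Bf : Fin n → Finset (Fin m),
      (∀ j : Fin n, j ≠ i → Bf j ⊆ A j ∧ (Bf j).card ≤ 1) ∧
      (util u i (A i) + y * util u i B) / w i ≥
        (util u i Finset.univ - x * ∑ j ∈ Finset.univ.erase i, util u i (Bf j)) / (∑ j, w j)

/-- The (1-out-of-n) maximin share of agent `i`. -/
noncomputable def MMS {n m : ℕ} (u : Fin n → Fin m → ℝ) (i : Fin n) : ℝ :=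
  sSup {v : ℝ | ∃ Z : Fin n → Finset (Fin m), IsAllocation Z ∧ v = ⨅ j, util u i (Z j)}

/-- The normalized maximin share of agent `i`. -/
noncomputable def NMMS {n m : ℕ} (w : Fin n → ℝ) (u : Fin n → Fin m → ℝ) (i : Fin n) : ℝ :=
  (w i / ∑ j, w j) * (n : ℝ) * MMS u i

/-- The weighted maximin share of agent `i`. -/
noncomputable def WMMS {n m : ℕ} (w : Fin n → ℝ) (u : Fin n → Fin m → ℝ) (i : Fin n) : ℝ :=
  w i * sSup {v : ℝ | ∃ Z : Fin n → Finset (Fin m), IsAllocation Z ∧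
    v = ⨅ j, util u i (Z j) / w j}

lemma util_one' {n m : ℕ} (i : Fin n) (S : Finset (Fin m)) :
    util (fun _ _ => (1:ℝ)) i S = S.card := by simp [util]

lemma sum_card_eq' {n m : ℕ} {A : Fin n → Finset (Fin m)} (h : IsAllocation A) :
    ∑ i, (A i).card = m := by
  have := Finset.card_biUnion (s := (univ : Finset (Fin n))) (t := A)
    (fun i _ j _ hij => h.1 i j hij)
  rw [h.2] at this
  simpa using this.symm

lemma prod8_le_two (c : Fin 8 → ℕ) (h1 : ∀ i, 1 ≤ c i) (hs : ∑ i, c i ≤ 9) :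
    ∏ i, c i ≤ 2 := by
  have h : ∀ i ∈ (univ : Finset (Fin 8)), c i ≤ 2 ^ (c i - 1) := by
    intro i _
    have := Nat.lt_two_pow_self (n := c i - 1)
    have := h1 i
    omega
  calc ∏ i, c i ≤ ∏ i, 2 ^ (c i - 1) := Finset.prod_le_prod' h
    _ = 2 ^ (∑ i, (c i - 1)) := Finset.prod_pow_eq_pow_sum _ _ _
    _ ≤ 2 ^ 1 := by
        apply Nat.pow_le_pow_right (by norm_num)
        have : ∑ i, (c i - 1) + ∑ i : Fin 8, 1 = ∑ i, c i := by
          rw [← Finset.sum_add_distrib]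
          exact Finset.sum_congr rfl (fun i _ => by have := h1 i; omega)
        simp at this; omega
    _ = 2 := rfl

lemma natB : ∀ c0 : ℕ, c0 ≤ 12 → 2 ≤ c0 → c0 * (12 - c0)^8 < 11^8 := by decide

noncomputable def eps (x : ℝ) : ℝ := (7 - 8*x)/100

lemma eps_pos {x : ℝ} (h : x < 7/8) : 0 < eps x := by rw [eps]; linarith

lemma eps_lt_one {x : ℝ} (h : 0 ≤ x) : eps x < 1 := by rw [eps]; linarith

noncomputable def wA (x : ℝ) : Fin 9 → ℝ := fun i => if i = 0 then 1 else eps x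

lemma wA_zero (x : ℝ) : wA x 0 = 1 := rfl
lemma wA_succ (x : ℝ) (i : Fin 8) : wA x i.succ = eps x := by
  rw [wA]; simp [Fin.succ_ne_zero i]
lemma wA_pos {x : ℝ} (h : x < 7/8) (i : Fin 9) : 0 < wA x i := by
  simp only [wA]
  split
  · norm_num
  · exact eps_pos h
lemma sum_wA (x : ℝ) : ∑ j, wA x j = 1 + 8 * eps x := by
  rw [Fin.sum_univ_succ, wA_zero]
  simp only [wA_succ, Finset.sum_const, Finset.card_univ, Fintype.card_fin, nsmul_eq_mul]
  norm_num

def RA : Fin 9 → Finset (Fin 10) :=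
  fun i => if i = 0 then ({0, 9} : Finset (Fin 10)) else {⟨i.1, i.2.trans (by norm_num)⟩}

lemma RA_alloc : IsAllocation RA := by
  constructor
  · decide
  · decide

lemma RA_card_zero : (RA 0).card = 2 := by decide
lemma RA_card_succ (i : Fin 8) : (RA i.succ).card = 1 := by
  rw [RA]; simp [Fin.succ_ne_zero i]

def wB : Fin 2 → ℝ := fun i => if i = 0 then 1 else 8

lemma wB_zero : wB 0 = 1 := rfl
lemma wB_one : wB 1 = 8 := rfl
lemma wB_pos (i : Fin 2) : 0 < wB i := by
  simp only [wB]
  split <;> norm_num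
lemma sum_wB : ∑ j, wB j = 9 := by
  rw [Fin.sum_univ_two, wB_zero, wB_one]; norm_num

def RB : Fin 2 → Finset (Fin 12) :=
  fun i => if i = 0 then ({0} : Finset (Fin 12)) else Finset.univ.erase 0

lemma RB_alloc : IsAllocation RB := by
  constructor
  · decide
  · decide

lemma RB_card_zero : (RB 0).card = 1 := by decide
lemma RB_card_one : (RB 1).card = 11 := by decide

/-- For each x ∈ [0,1], there is an identical-item instance where every allocation
maximizing the weighted Nash welfare fails WPROP(x,1−x). -/
theorem mwnw_not_wprop (x : ℝ) (hx : x ∈ Set.Icc (0 : ℝ) 1) :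
    ∃ (n m : ℕ) (w : Fin n → ℝ), 2 ≤ n ∧ (∀ i, 0 < w i) ∧
      ∀ A : Fin n → Finset (Fin m), IsAllocation A →
        (∀ A' : Fin n → Finset (Fin m), IsAllocation A' →
          ∏ i, (util (fun _ _ => (1 : ℝ)) i (A' i)) ^ (w i) ≤
            ∏ i, (util (fun _ _ => (1 : ℝ)) i (A i)) ^ (w i)) →
        ¬ WPROP w (fun _ _ => (1 : ℝ)) A x (1 - x) := by
  obtain ⟨hx0, hx1⟩ := hx
  by_cases hx7 : x < 7/8
  · -- Case A : n = 9, m = 10, weights (1, ε, ..., ε)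
    have hε : 0 < eps x := eps_pos hx7
    have hε1 : eps x < 1 := eps_lt_one hx0
    refine ⟨9, 10, wA x, by norm_num, wA_pos hx7, ?_⟩
    intro A hA hmax hW
    have hprodR : ∏ i, (util (fun _ _ => (1 : ℝ)) i (RA i)) ^ (wA x i) = 2 := by
      rw [Fin.prod_univ_succ]
      have h0 : (util (fun _ _ => (1 : ℝ)) (0 : Fin 9) (RA 0)) ^ (wA x 0) = 2 := by
        rw [util_one', RA_card_zero, wA_zero, Real.rpow_one]
        norm_num
      have hs : ∀ i : Fin 8,
          (util (fun _ _ => (1 : ℝ)) i.succ (RA i.succ)) ^ (wA x i.succ) = 1 := by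
        intro i
        rw [util_one', RA_card_succ, wA_succ, Nat.cast_one, Real.one_rpow]
      rw [h0]
      simp only [hs, Finset.prod_const_one, mul_one]
    have h2le : (2:ℝ) ≤ ∏ i, (((A i).card : ℝ)) ^ (wA x i) := by
      have h := hmax RA RA_alloc
      rw [hprodR] at h
      calc (2:ℝ) ≤ ∏ i, (util (fun _ _ => (1 : ℝ)) i (A i)) ^ (wA x i) := h
        _ = ∏ i, (((A i).card : ℝ)) ^ (wA x i) :=
            Finset.prod_congr rfl fun i _ => by rw [util_one']
    -- every bundle nonempty
    have hpos : ∀ i, 1 ≤ (A i).card := by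
      intro i
      by_contra h
      push_neg at h
      have h0 : (A i).card = 0 := by omega
      have hzero : ∏ i, (((A i).card : ℝ)) ^ (wA x i) = 0 := by
        apply Finset.prod_eq_zero (Finset.mem_univ i)
        rw [h0, Nat.cast_zero]
        exact Real.zero_rpow (ne_of_gt (wA_pos hx7 i))
      rw [hzero] at h2le
      linarith
    have hsum : ∑ i, (A i).card = 10 := sum_card_eq' hA
    have hsplit : (A 0).card + ∑ i : Fin 8, (A (Fin.succ i)).card = 10 := by
      have h := Fin.sum_univ_succ (fun i : Fin 9 => (A i).card)
      rw [hsum] at h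
      simpa using h.symm
    have h8 : 8 ≤ ∑ i : Fin 8, (A (Fin.succ i)).card := by
      calc (8:ℕ) = ∑ _i : Fin 8, 1 := by simp
        _ ≤ _ := Finset.sum_le_sum (fun i _ => hpos _)
    have hc0 : (A 0).card = 2 := by
      by_contra hne
      have hc01 : (A 0).card = 1 := by
        have := hpos 0; omega
      have hprodA : ∏ i : Fin 9, (((A i).card : ℝ)) ^ (wA x i)
          = ((A 0).card : ℝ) ^ (wA x 0)
            * ∏ i : Fin 8, (((A (Fin.succ i)).card : ℝ)) ^ (eps x) := by
        rw [Fin.prod_univ_succ]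
        refine congrArg _ (Finset.prod_congr rfl fun i _ => ?_)
        rw [wA_succ]
      have hprod2 : ∏ i : Fin 8, (((A (Fin.succ i)).card : ℝ)) ^ (eps x)
          = ((∏ i : Fin 8, ((A (Fin.succ i)).card : ℝ))) ^ (eps x) :=
        Real.finset_prod_rpow _ _ (fun i _ => Nat.cast_nonneg _) _
      have hnat : ∏ i : Fin 8, (A (Fin.succ i)).card ≤ 2 :=
        prod8_le_two _ (fun i => hpos _) (by omega)
      have hcast : (∏ i : Fin 8, ((A (Fin.succ i)).card : ℝ)) ≤ 2 := by
        rw [← Nat.cast_prod]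
        exact_mod_cast hnat
      have hP0 : (0:ℝ) ≤ ∏ i : Fin 8, ((A (Fin.succ i)).card : ℝ) :=
        Finset.prod_nonneg fun i _ => Nat.cast_nonneg _
      have hlt : (∏ i : Fin 8, ((A (Fin.succ i)).card : ℝ)) ^ (eps x) < 2 := by
        calc (∏ i : Fin 8, ((A (Fin.succ i)).card : ℝ)) ^ (eps x)
            ≤ (2:ℝ) ^ (eps x) := Real.rpow_le_rpow hP0 hcast hε.le
          _ < (2:ℝ) ^ (1:ℝ) := Real.rpow_lt_rpow_of_exponent_lt (by norm_num) hε1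
          _ = 2 := Real.rpow_one 2
      rw [hprodA, hprod2, hc01, wA_zero] at h2le
      simp only [Nat.cast_one, Real.rpow_one, one_mul] at h2le
      linarith
    -- now derive failure of WPROP for agent 0
    obtain ⟨B, hBsub, hBcard, hineq⟩ := hW 0
    rw [util_one', util_one', util_one', hc0, sum_wA, wA_zero] at hineq
    have hd : (0:ℝ) < 1 + 8 * eps x := by linarith
    have hxε : 0 ≤ x * (7 - 8*x) := mul_nonneg hx0 (by linarith)
    have hepsdef : eps x = (7 - 8*x)/100 := rfl
    have hB01 : B.card = 0 ∨ B.card = 1 := by omega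
    rcases hB01 with hB | hB
    · rw [hB] at hineq
      simp only [Nat.cast_zero, mul_zero, add_zero, sub_zero] at hineq
      rw [ge_iff_le, div_le_div_iff₀ hd (by norm_num : (0:ℝ) < 1)] at hineq
      rw [hepsdef] at hineq
      norm_num at hineq
      nlinarith
    · rw [hB] at hineq
      simp only [Nat.cast_one, mul_one] at hineq
      rw [ge_iff_le, div_le_div_iff₀ hd (by norm_num : (0:ℝ) < 1)] at hineq
      rw [hepsdef] at hineq
      norm_num at hineq
      nlinarith
  · -- Case B : n = 2, m = 12, weights (1, 8)
    push_neg at hx7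
    refine ⟨2, 12, wB, le_refl 2, wB_pos, ?_⟩
    intro A hA hmax hW
    have hprodR : ∏ i, (util (fun _ _ => (1 : ℝ)) i (RB i)) ^ (wB i) = (11:ℝ)^(8:ℕ) := by
      rw [Fin.prod_univ_two, util_one', util_one', RB_card_zero, RB_card_one,
        wB_zero, wB_one, Nat.cast_one, Real.one_rpow, one_mul,
        show ((8:ℝ)) = ((8:ℕ):ℝ) by norm_num, Real.rpow_natCast]
      norm_num
    have hle : (11:ℝ)^(8:ℕ) ≤ ((A 0).card : ℝ) * ((A 1).card : ℝ) ^ (8:ℕ) := by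
      have h := hmax RB RB_alloc
      rw [hprodR] at h
      calc (11:ℝ)^(8:ℕ) ≤ ∏ i, (util (fun _ _ => (1 : ℝ)) i (A i)) ^ (wB i) := h
        _ = ((A 0).card : ℝ) * ((A 1).card : ℝ) ^ (8:ℕ) := by
            rw [Fin.prod_univ_two, util_one', util_one', wB_zero, wB_one, Real.rpow_one,
              show ((8:ℝ)) = ((8:ℕ):ℝ) by norm_num, Real.rpow_natCast]
    have hsum : (A 0).card + (A 1).card = 12 := by
      have := sum_card_eq' hA
      rwa [Fin.sum_univ_two] at this
    have hc0 : (A 0).card = 1 := by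
      rcases Nat.lt_or_ge ((A 0).card) 2 with h2 | h2
      · have h01 : (A 0).card = 0 ∨ (A 0).card = 1 := by omega
        rcases h01 with h0 | h1
        · exfalso
          rw [h0] at hle
          norm_num at hle
        · exact h1
      · exfalso
        have hnat : (A 0).card * ((A 1).card)^8 < 11^8 := by
          have hc1 : (A 1).card = 12 - (A 0).card := by omega
          rw [hc1]; exact natB _ (by omega) h2
        have hcastlt : (((A 0).card : ℝ)) * (((A 1).card : ℝ))^(8:ℕ) < (11:ℝ)^(8:ℕ) := by
          exact_mod_cast hnat
        linarith
    obtain ⟨B, hBsub, hBcard, hineq⟩ := hW 0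
    rw [util_one', util_one', util_one', hc0, sum_wB, wB_zero] at hineq
    have hB01 : B.card = 0 ∨ B.card = 1 := by omega
    rcases hB01 with hB | hB
    · rw [hB] at hineq
      simp only [Nat.cast_zero, mul_zero, add_zero, sub_zero, Nat.cast_one] at hineq
      rw [ge_iff_le, div_le_div_iff₀ (by norm_num : (0:ℝ) < 9) (by norm_num : (0:ℝ) < 1)] at hineq
      norm_num at hineq
    · rw [hB] at hineq
      simp only [Nat.cast_one, mul_one] at hineq
      rw [ge_iff_le, div_le_div_iff₀ (by norm_num : (0:ℝ) < 9) (by norm_num : (0:ℝ) < 1)] at hineq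
      norm_num at hineq
      linarith
end

section
/- Every allocation satisfying WEF(1,0) is 1/n-NMMS. -/
open Finset

section Aux

open Finset

private lemma util_nonneg' {n m : ℕ} (u : Fin n → Fin m → ℝ) (hu : ∀ i g, 0 ≤ u i g)
    (i : Fin n) (S : Finset (Fin m)) : 0 ≤ util u i S :=
  Finset.sum_nonneg fun g _ => hu i g

private lemma util_mono' {n m : ℕ} (u : Fin n → Fin m → ℝ) (hu : ∀ i g, 0 ≤ u i g)
    (i : Fin n) {S T : Finset (Fin m)} (h : S ⊆ T) : util u i S ≤ util u i T :=
  Finset.sum_le_sum_of_subset_of_nonneg h (fun g _ _ => hu i g)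

end Aux

/-- Every WEF(1,0) allocation is 1/n-NMMS. -/
theorem wef1_implies_inv_n_nmms (n m : ℕ) (hn : 2 ≤ n)
    (w : Fin n → ℝ) (hw : ∀ i, 0 < w i)
    (u : Fin n → Fin m → ℝ) (hu : ∀ i g, 0 ≤ u i g)
    (A : Fin n → Finset (Fin m)) (hA : IsAllocation A)
    (hWEF : WEF w u A 1 0) :
    ∀ i, util u i (A i) ≥ (1 / (n : ℝ)) * NMMS w u i := by
  classical
  intro i
  obtain ⟨hdisj, hcover⟩ := hA
  have hW : 0 < ∑ j, w j := Finset.sum_pos (fun j _ => hw j) ⟨i, mem_univ i⟩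
  have hWne : (∑ j, w j) ≠ 0 := ne_of_gt hW
  have hwine : w i ≠ 0 := ne_of_gt (hw i)
  set X := util u i (A i) with hXdef
  -- choose the envy-witness bundles
  have hBex : ∀ j : Fin n, ∃ B : Finset (Fin m), B ⊆ A j ∧ B.card ≤ 1 ∧
      util u i (A j) - util u i B ≤ w j * (X / w i) := by
    intro j
    by_cases hji : j = i
    · refine ⟨∅, empty_subset _, by simp, ?_⟩
      rw [hji]
      have h : w i * (X / w i) = X := by field_simp
      rw [h, show util u i (∅ : Finset (Fin m)) = 0 from by simp [util], sub_zero]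
    · obtain ⟨B, hB1, hB2, hB3⟩ := hWEF i j
      refine ⟨B, hB1, hB2, ?_⟩
      have h3 : (util u i (A j) - util u i B) / w j ≤ X / w i := by
        have := hB3; simp only [zero_mul, add_zero, one_mul] at this
        exact this
      have := (div_le_iff₀ (hw j)).mp h3
      linarith [this]
  choose B hBsub hBcard hBineq using hBex
  -- replace B i by ∅
  set B' : Fin n → Finset (Fin m) := fun j => if j = i then ∅ else B j with hB'def
  have hB'sub : ∀ j, B' j ⊆ A j := by
    intro j; by_cases hji : j = i <;> simp [hB'def, hji, hBsub]
  have hB'card : ∀ j, (B' j).card ≤ 1 := by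
    intro j; by_cases hji : j = i <;> simp [hB'def, hji, hBcard]
  have hB'ineq : ∀ j, util u i (A j) - util u i (B' j) ≤ w j * (X / w i) := by
    intro j; by_cases hji : j = i
    · simp only [hB'def, if_pos hji]
      rw [hji]
      have h : w i * (X / w i) = X := by field_simp
      rw [h, show util u i (∅ : Finset (Fin m)) = 0 from by simp [util], sub_zero]
    · simpa [hB'def, hji] using hBineq j
  have hB'i : util u i (B' i) = 0 := by simp [hB'def, util]
  have hB'pd : ∀ a ∈ Finset.univ.erase i, ∀ b ∈ Finset.univ.erase i, a ≠ b →
      Disjoint (B' a) (B' b) := fun a _ b _ hab =>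
    Disjoint.mono (hB'sub a) (hB'sub b) (hdisj a b hab)
  -- the set of removed items
  set T : Finset (Fin m) := (Finset.univ.erase i).biUnion B' with hTdef
  have hTsum : util u i T = ∑ j ∈ Finset.univ.erase i, util u i (B' j) := by
    rw [hTdef, util, Finset.sum_biUnion hB'pd]
    simp [util]
  have hTcard : T.card < n := by
    calc T.card ≤ ∑ j ∈ Finset.univ.erase i, (B' j).card := Finset.card_biUnion_le
    _ ≤ ∑ j ∈ Finset.univ.erase i, 1 := Finset.sum_le_sum (fun j _ => hB'card j)
    _ = n - 1 := by simp [Finset.card_erase_of_mem]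
    _ < n := by omega
  -- key bound on MMS
  have hMMSle : MMS u i ≤ util u i Finset.univ - util u i T := by
    have hbound : 0 ≤ util u i Finset.univ - util u i T :=
      sub_nonneg.mpr (util_mono' u hu i (subset_univ T))
    apply Real.sSup_le _ hbound
    rintro v ⟨Z, ⟨hZdisj, hZcover⟩, rfl⟩
    -- every item belongs to some bundle
    have hmem : ∀ g : Fin m, ∃ j, g ∈ Z j := by
      intro g
      have : g ∈ Finset.univ.biUnion Z := hZcover ▸ mem_univ g
      simpa using Finset.mem_biUnion.mp this
    choose f hf using hmem
    -- some bundle avoids T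
    obtain ⟨k0, hk0⟩ : ∃ k0 : Fin n, k0 ∉ T.image f := by
      by_contra h
      push_neg at h
      have hsub : (Finset.univ : Finset (Fin n)) ⊆ T.image f := fun k _ => h k
      have h1 := Finset.card_le_card hsub
      have hle := Finset.card_image_le (s := T) (f := f)
      simp only [Finset.card_univ, Fintype.card_fin] at h1
      omega
    have hZsub : Z k0 ⊆ Finset.univ \ T := by
      intro g hg
      rw [Finset.mem_sdiff]
      refine ⟨mem_univ g, fun hgT => ?_⟩
      have hfg : f g = k0 := by
        by_contra hne
        exact (Finset.disjoint_left.mp (hZdisj (f g) k0 hne) (hf g)) hg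
      exact hk0 (Finset.mem_image.mpr ⟨g, hgT, hfg⟩)
    have h1 : (⨅ j, util u i (Z j)) ≤ util u i (Z k0) :=
      ciInf_le ⟨0, by rintro x ⟨j, rfl⟩; exact util_nonneg' u hu i (Z j)⟩ k0
    have h2 : util u i (Z k0) ≤ util u i (Finset.univ \ T) := util_mono' u hu i hZsub
    have h3 : util u i (Finset.univ \ T) = util u i Finset.univ - util u i T := by
      rw [util, util, util, Finset.sum_sdiff_eq_sub (subset_univ T)]
    linarith
  -- sum the WEF inequalities
  have hsumA : ∑ j, util u i (A j) = util u i Finset.univ := by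
    rw [util, ← hcover, Finset.sum_biUnion (fun a _ b _ hab => hdisj a b hab)]
    simp [util]
  have hsumB : ∑ j, util u i (B' j) = util u i T := by
    rw [hTsum, ← Finset.sum_erase_add _ _ (mem_univ i), hB'i, add_zero]
  have hsum : util u i Finset.univ - util u i T ≤ (∑ j, w j) * (X / w i) := by
    calc util u i Finset.univ - util u i T
        = ∑ j, (util u i (A j) - util u i (B' j)) := by
          rw [Finset.sum_sub_distrib, hsumA, hsumB]
      _ ≤ ∑ j, w j * (X / w i) := Finset.sum_le_sum (fun j _ => hB'ineq j)
      _ = (∑ j, w j) * (X / w i) := by rw [Finset.sum_mul]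
  have hMMS : MMS u i ≤ (∑ j, w j) * (X / w i) := le_trans hMMSle hsum
  -- final arithmetic
  have hn0 : (n : ℝ) ≠ 0 := Nat.cast_ne_zero.mpr (by omega)
  rw [NMMS, ge_iff_le]
  have hkey : (w i / ∑ j, w j) * MMS u i ≤ X := by
    have h1 : (w i / ∑ j, w j) * MMS u i ≤ (w i / ∑ j, w j) * ((∑ j, w j) * (X / w i)) :=
      mul_le_mul_of_nonneg_left hMMS (le_of_lt (div_pos (hw i) hW))
    have h2 : (w i / ∑ j, w j) * ((∑ j, w j) * (X / w i)) = X := by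
      field_simp
    linarith
  calc 1 / (n : ℝ) * ((w i / ∑ j, w j) * n * MMS u i)
      = (w i / ∑ j, w j) * MMS u i := by field_simp
    _ ≤ X := hkey
end
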